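/- For any H-balanced directed graph G = (V, E) on n vertices, ε ∈ (0, 0.1), and a vertex v ∈ V with δ⁺(v) < H − 2 log n / ε, it holds that (1/2 − ε)·core(v) − 2 log n / ε ≤ δ⁺(v), where core(v) is the coreness of v in the underlying undirected graph. -/

import Mathlib

open Finset

/-- Out-degree of `v` in the directed edge set `E`. -/
def outdeg {V : Type*} [DecidableEq V] (E : Finset (V × V)) (v : V) : ℕ :=
  (E.filter fun e => e.1 = v).card

/-- A directed graph is `H`-balanced if `min(δ⁺(u), H) ≤ min(δ⁺(v), H) + 1`
for every edge `u → v`. -/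
def IsHBalanced {V : Type*} [DecidableEq V] (E : Finset (V × V)) (H : ℕ) : Prop :=
  ∀ e ∈ E, min (outdeg E e.1) H ≤ min (outdeg E e.2) H + 1

/-- Degree of `u` inside `S` in the underlying undirected graph of `E`. -/
def udegIn {V : Type*} [DecidableEq V] (E : Finset (V × V)) (S : Finset V) (u : V) : ℕ :=
  (S.filter fun w => w ≠ u ∧ ((u, w) ∈ E ∨ (w, u) ∈ E)).card

/-- Minimum degree of the induced subgraph on `S` in the underlying undirected graph. -/
def mindegIn {V : Type*} [DecidableEq V] (E : Finset (V × V)) (S : Finset V) : ℕ :=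
  if h : S.Nonempty then S.inf' h (udegIn E S) else 0

/-- Coreness of `v` in the underlying undirected graph: the maximum over subsets
`S ∋ v` of the minimum degree of the induced subgraph on `S`. -/
def core {V : Type*} [Fintype V] [DecidableEq V] (E : Finset (V × V)) (v : V) : ℕ :=
  ((univ : Finset V).powerset.filter fun S => v ∈ S).sup (mindegIn E)

lemma card_filter_le_outdeg {V : Type*} [DecidableEq V] (E : Finset (V × V)) (u : V)
    (T : Finset V) (p : V → Prop) [DecidablePred p] :
    (T.filter fun w => p w ∧ (u, w) ∈ E).card ≤ outdeg E u := by
  unfold outdeg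
  apply Finset.card_le_card_of_injOn (fun w => (u, w))
  · intro w hw
    simp only [mem_coe, mem_filter] at hw
    simp [hw.2.2]
  · intro a _ b _ h
    simpa using h

lemma step_bound {V : Type*} [DecidableEq V] (E : Finset (V × V)) (H : ℕ)
    (hbal : IsHBalanced E H) (S : Finset V) (k c : ℕ) (hc : c + 1 < H)
    (hS : ∀ u ∈ S, k ≤ udegIn E S u) :
    k * (S.filter fun u => min (outdeg E u) H ≤ c).card ≤
      c * (S.filter fun u => min (outdeg E u) H ≤ c).card +
      (c + 1) * (S.filter fun u => min (outdeg E u) H ≤ c + 1).card := by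
  set A := S.filter fun u => min (outdeg E u) H ≤ c with hA
  set B := S.filter fun u => min (outdeg E u) H ≤ c + 1 with hB
  have h1 : A.card * k ≤ ∑ u ∈ A, udegIn E S u := by
    have := Finset.card_nsmul_le_sum A (udegIn E S) k
      (fun u hu => hS u (Finset.mem_filter.mp hu).1)
    simpa [smul_eq_mul] using this
  have h2 : ∀ u ∈ A, udegIn E S u ≤ c + (B.filter fun w => (w, u) ∈ E).card := by
    intro u hu
    have huS := (Finset.mem_filter.mp hu).1
    have hud : min (outdeg E u) H ≤ c := (Finset.mem_filter.mp hu).2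
    have hout : outdeg E u ≤ c := by omega
    have hsub : (S.filter fun w => w ≠ u ∧ ((u, w) ∈ E ∨ (w, u) ∈ E)) ⊆
        (S.filter fun w => w ≠ u ∧ (u, w) ∈ E) ∪ (B.filter fun w => (w, u) ∈ E) := by
      intro w hw
      simp only [Finset.mem_filter, Finset.mem_union, hB] at hw ⊢
      obtain ⟨hwS, hne, hor⟩ := hw
      rcases hor with h | h
      · exact Or.inl ⟨hwS, hne, h⟩
      · refine Or.inr ⟨⟨hwS, ?_⟩, h⟩
        have hb := hbal (w, u) h
        simp only at hb
        omega
    calc udegIn E S u ≤ ((S.filter fun w => w ≠ u ∧ (u, w) ∈ E) ∪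
          (B.filter fun w => (w, u) ∈ E)).card := Finset.card_le_card hsub
      _ ≤ (S.filter fun w => w ≠ u ∧ (u, w) ∈ E).card
            + (B.filter fun w => (w, u) ∈ E).card := Finset.card_union_le _ _
      _ ≤ c + (B.filter fun w => (w, u) ∈ E).card := by
          have := card_filter_le_outdeg E u S (fun w => w ≠ u)
          omega
  have h3 : ∑ u ∈ A, (B.filter fun w => (w, u) ∈ E).card ≤ (c + 1) * B.card := by
    have hswap : ∑ u ∈ A, (B.filter fun w => (w, u) ∈ E).card
        = ∑ w ∈ B, (A.filter fun x => (w, x) ∈ E).card := by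
      simp only [Finset.card_filter]
      exact Finset.sum_comm
    rw [hswap]
    calc ∑ w ∈ B, (A.filter fun x => (w, x) ∈ E).card
        ≤ ∑ _w ∈ B, (c + 1) := by
          apply Finset.sum_le_sum
          intro w hw
          have hwB := (Finset.mem_filter.mp hw).2
          have hout : outdeg E w ≤ c + 1 := by omega
          have h4 : (A.filter fun x => (w, x) ∈ E).card ≤ outdeg E w := by
            have := card_filter_le_outdeg E w A (fun _ => True)
            simpa using this
          omega
      _ = (c + 1) * B.card := by rw [Finset.sum_const, smul_eq_mul, mul_comm]
  calc k * A.card = A.card * k := by ring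
    _ ≤ ∑ u ∈ A, udegIn E S u := h1
    _ ≤ ∑ u ∈ A, (c + (B.filter fun w => (w, u) ∈ E).card) := Finset.sum_le_sum h2
    _ = c * A.card + ∑ u ∈ A, (B.filter fun w => (w, u) ∈ E).card := by
        rw [Finset.sum_add_distrib, Finset.sum_const, smul_eq_mul, mul_comm]
    _ ≤ c * A.card + (c + 1) * B.card := Nat.add_le_add_left h3 _

lemma growth_arith (ε k L i t t' : ℝ) (hε0 : 0 < ε) (hε1 : ε < 0.1) (ht0 : 0 ≤ t)
    (hA : L + i + 1 ≤ (1 / 2 - ε) * k) (hkpos : 0 < k) (hL0 : 0 ≤ L) (hi0 : 0 ≤ i)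
    (hmain : k * t ≤ (L + i) * t + (L + i + 1) * t') :
    (1 + 3 * ε) * t ≤ t' := by
  have hxpos : (0:ℝ) < L + i + 1 := by linarith
  have h1 : (1 + 3 * ε) * (L + i + 1) ≤ k - (L + i) := by
    nlinarith [mul_le_mul_of_nonneg_left hA (show (0:ℝ) ≤ 2 + 3 * ε by linarith),
      mul_nonneg (mul_nonneg hε0.le hε0.le) hkpos.le, mul_nonneg hε0.le hkpos.le]
  have h2 : (L + i + 1) * ((1 + 3 * ε) * t) ≤ (L + i + 1) * t' := by
    calc (L + i + 1) * ((1 + 3 * ε) * t)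
        = ((1 + 3 * ε) * (L + i + 1)) * t := by ring
      _ ≤ (k - (L + i)) * t := mul_le_mul_of_nonneg_right h1 ht0
      _ ≤ (L + i + 1) * t' := by nlinarith [hmain]
  exact le_of_mul_le_mul_left h2 hxpos

/-- For any `H`-balanced directed graph on `n` vertices, `ε ∈ (0, 0.1)`, and a vertex `v`
with `δ⁺(v) < H − 2 log n / ε`, we have `(1/2 − ε)·core(v) − 2 log n / ε ≤ δ⁺(v)`. -/
theorem core_lower_bound_outdeg {V : Type*} [Fintype V] [DecidableEq V]
    (E : Finset (V × V)) (H : ℕ) (ε : ℝ) (v : V)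
    (hbal : IsHBalanced E H) (hε0 : 0 < ε) (hε1 : ε < 0.1)
    (hv : (outdeg E v : ℝ) < (H : ℝ) - 2 * Real.log (Fintype.card V) / ε) :
    (1 / 2 - ε) * (core E v : ℝ) - 2 * Real.log (Fintype.card V) / ε ≤ (outdeg E v : ℝ) := by
  by_contra hcon
  push_neg at hcon
  set n := Fintype.card V with hn
  set k := core E v with hk
  set L := outdeg E v with hL
  set D := 2 * Real.log (n : ℝ) / ε with hD
  clear_value k L D
  have hn1 : 1 ≤ n := Fintype.card_pos_iff.mpr ⟨v⟩
  have hlogn0 : 0 ≤ Real.log (n : ℝ) := Real.log_nonneg (by exact_mod_cast hn1)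
  have hD0 : 0 ≤ D := by rw [hD]; positivity
  have hL0 : (0:ℝ) ≤ (L : ℝ) := Nat.cast_nonneg _
  have hkpos : (0:ℝ) < (k : ℝ) := by nlinarith
  have hk1 : 1 ≤ k := by
    have : 0 < k := by exact_mod_cast hkpos
    omega
  -- get a witnessing core subgraph S
  obtain ⟨S, hSmem, hScore⟩ := Finset.exists_mem_eq_sup
    ((univ : Finset V).powerset.filter fun S => v ∈ S)
    ⟨univ, by simp⟩ (mindegIn E)
  have hvS : v ∈ S := (Finset.mem_filter.mp hSmem).2
  have hSne : S.Nonempty := ⟨v, hvS⟩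
  have hcoreS : k = mindegIn E S := by rw [hk]; exact hScore
  have hSk : ∀ u ∈ S, k ≤ udegIn E S u := by
    intro u hu
    rw [hcoreS, mindegIn, dif_pos hSne]
    exact Finset.inf'_le _ hu
  -- n ≥ 2
  have hudv : 1 ≤ udegIn E S v := le_trans hk1 (hSk v hvS)
  obtain ⟨w, hw⟩ := Finset.card_pos.mp (lt_of_lt_of_le zero_lt_one hudv)
  have hwv : w ≠ v := (Finset.mem_filter.mp hw).2.1
  have hn2 : 2 ≤ n := by rw [hn]; exact Fintype.one_lt_card_iff.mpr ⟨w, v, hwv⟩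
  have hlog2 : Real.log 2 ≤ Real.log (n : ℝ) := by
    gcongr
    exact_mod_cast hn2
  have hlog2' : (0.69:ℝ) ≤ Real.log 2 := by
    have := Real.log_two_gt_d9; linarith
  have hD13 : (13:ℝ) ≤ D := by
    rw [hD, le_div_iff₀ hε0]
    nlinarith
  -- key growth step
  have key : ∀ i : ℕ, (i : ℝ) + 1 ≤ D →
      (1 + 3 * ε) * ((S.filter fun u => min (outdeg E u) H ≤ L + i).card : ℝ)
        ≤ ((S.filter fun u => min (outdeg E u) H ≤ L + i + 1).card : ℝ) := by
    intro i hiD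
    have hcH : L + i + 1 < H := by
      have hr : ((L + i + 1 : ℕ) : ℝ) < (H : ℝ) := by push_cast; linarith
      exact_mod_cast hr
    have hstep := step_bound E H hbal S k (L + i) hcH hSk
    set t := ((S.filter fun u => min (outdeg E u) H ≤ L + i).card : ℝ) with ht
    set t' := ((S.filter fun u => min (outdeg E u) H ≤ L + i + 1).card : ℝ) with ht'
    have hstepR : (k:ℝ) * t ≤ ((L:ℝ) + i) * t + ((L:ℝ) + i + 1) * t' := by
      rw [ht, ht']
      exact_mod_cast hstep
    clear_value t t'
    have ht0 : (0:ℝ) ≤ t := by rw [ht]; positivity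
    have hA : (L:ℝ) + i + 1 ≤ (1 / 2 - ε) * k := by
      have hi0 : (0:ℝ) ≤ (i:ℝ) := Nat.cast_nonneg _
      linarith
    exact growth_arith ε k L i t t' hε0 hε1 ht0 hA hkpos (Nat.cast_nonneg _)
      (Nat.cast_nonneg _) hstepR
  -- growth by induction
  have h3e0 : (0:ℝ) ≤ 1 + 3 * ε := by linarith
  have grow : ∀ j : ℕ, (j : ℝ) ≤ D →
      (1 + 3 * ε) ^ j ≤ ((S.filter fun u => min (outdeg E u) H ≤ L + j).card : ℝ) := by
    intro j
    induction j with
    | zero =>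
      intro _
      have hvT : v ∈ S.filter fun u => min (outdeg E u) H ≤ L + 0 := by
        rw [Finset.mem_filter]
        exact ⟨hvS, by omega⟩
      have h1 : 1 ≤ (S.filter fun u => min (outdeg E u) H ≤ L + 0).card :=
        Finset.card_pos.mpr ⟨v, hvT⟩
      simpa using (show ((1:ℕ):ℝ) ≤ _ from Nat.cast_le.mpr h1)
    | succ j ih =>
      intro hjD
      have hjr : ((j:ℝ) + 1) ≤ D := by push_cast at hjD; linarith
      have h1 := ih (by linarith [hjr, show (0:ℝ) ≤ 1 by norm_num])
      have h2 := key j hjr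
      calc (1 + 3 * ε) ^ (j + 1) = (1 + 3 * ε) * (1 + 3 * ε) ^ j := by ring
        _ ≤ (1 + 3 * ε) * ((S.filter fun u => min (outdeg E u) H ≤ L + j).card : ℝ) :=
            mul_le_mul_of_nonneg_left h1 h3e0
        _ ≤ ((S.filter fun u => min (outdeg E u) H ≤ L + j + 1).card : ℝ) := h2
  -- final contradiction
  set m := Nat.floor (D / 4) + 1 with hm
  have hfl : ((Nat.floor (D / 4) : ℕ) : ℝ) ≤ D / 4 := Nat.floor_le (by positivity)
  have hmD : (m : ℝ) ≤ D := by
    rw [hm]; push_cast; linarith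
  have hmgt : D / 4 < (m : ℝ) := by
    have := Nat.lt_floor_add_one (D / 4)
    rw [hm]; push_cast; linarith
  have hfin := grow m hmD
  have hcard : ((S.filter fun u => min (outdeg E u) H ≤ L + m).card : ℝ) ≤ (n : ℝ) := by
    have h1 : (S.filter fun u => min (outdeg E u) H ≤ L + m).card ≤ n := by
      calc (S.filter fun u => min (outdeg E u) H ≤ L + m).card
          ≤ S.card := Finset.card_le_card (Finset.filter_subset _ _)
        _ ≤ n := by rw [hn]; exact Finset.card_le_univ S
    exact_mod_cast h1
  have hpow : (1 + 3 * ε) ^ m ≤ (n : ℝ) := le_trans hfin hcard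
  have hlogle : (m : ℝ) * Real.log (1 + 3 * ε) ≤ Real.log (n : ℝ) := by
    have h1 : Real.log ((1 + 3 * ε) ^ m) ≤ Real.log (n : ℝ) := by
      gcongr
    rwa [Real.log_pow] at h1
  have hlb : 2 * ε ≤ Real.log (1 + 3 * ε) := by
    have h0 : (0:ℝ) < 1 + 3 * ε := by linarith
    have hle := Real.log_le_sub_one_of_pos (show (0:ℝ) < (1 + 3 * ε)⁻¹ by positivity)
    rw [Real.log_inv] at hle
    have h2 : 1 - (1 + 3 * ε)⁻¹ ≤ Real.log (1 + 3 * ε) := by linarith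
    have heq : 1 - (1 + 3 * ε)⁻¹ = 3 * ε / (1 + 3 * ε) := by
      field_simp
      ring
    have h3 : 2 * ε ≤ 3 * ε / (1 + 3 * ε) := by
      rw [le_div_iff₀ h0]
      nlinarith
    linarith [heq ▸ h2]
  have hloggt : Real.log (n : ℝ) < (m : ℝ) * Real.log (1 + 3 * ε) := by
    have heq : Real.log (n : ℝ) = (D / 4) * (2 * ε) := by
      rw [hD]; field_simp; ring
    calc Real.log (n : ℝ) = (D / 4) * (2 * ε) := heq
      _ < (m : ℝ) * (2 * ε) := by
          apply mul_lt_mul_of_pos_right hmgt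
          linarith
      _ ≤ (m : ℝ) * Real.log (1 + 3 * ε) :=
          mul_le_mul_of_nonneg_left hlb (Nat.cast_nonneg m)
  linarith
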